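/- (Specker's theorem.) For every homomorphism of additive groups φ : (ℕ → ℤ) → ℤ there exists a unique finitely supported p ∈ (ℕ →₀ ℤ) such that φ(m) = ∑ i, p i * m i for all m ∈ (ℕ → ℤ). Equivalently, the map from (ℕ →₀ ℤ) to the group of additive homomorphisms (ℕ → ℤ) → ℤ, sending p to the homomorphism m ↦ ∑ i, p i * m i, is an isomorphism of additive groups. -/

import Mathlib

namespace SpeckerAux

noncomputable section
open Classical

/-- standard basis vector -/
def E (n : ℕ) : ℕ → ℤ := Pi.single n 1

def head (k : ℕ) (x : ℕ → ℤ) : ℕ → ℤ := fun n => if n < k then x n else 0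
def tail (k : ℕ) (x : ℕ → ℤ) : ℕ → ℤ := fun n => if n < k then 0 else x n

lemma head_add_tail (k : ℕ) (x : ℕ → ℤ) : head k x + tail k x = x := by
  funext n; simp only [head, tail, Pi.add_apply]; split <;> simp

variable (φ : (ℕ → ℤ) →+ ℤ)

lemma phi_eq (k : ℕ) (x : ℕ → ℤ) : φ x = φ (head k x) + φ (tail k x) := by
  rw [← map_add, head_add_tail]

lemma dvd_phi_tail {d : ℤ} {k : ℕ} {x : ℕ → ℤ} (h : ∀ n, k ≤ n → d ∣ x n) :
    d ∣ φ (tail k x) := by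
  have : tail k x = d • fun n => if n < k then 0 else x n / d := by
    funext n
    simp only [tail, Pi.smul_apply, smul_eq_mul]
    split
    · simp
    · rw [Int.mul_ediv_cancel' (h n (not_lt.mp ‹¬ n < k›))]
  rw [this, map_zsmul]
  exact Dvd.intro _ rfl

lemma head_eq_sum (k : ℕ) (x : ℕ → ℤ) :
    head k x = ∑ n ∈ Finset.range k, x n • E n := by
  funext i
  simp only [head, Finset.sum_apply, Pi.smul_apply, E, Pi.single_apply, smul_eq_mul,
    mul_ite, mul_one, mul_zero]
  rw [Finset.sum_ite_eq (Finset.range k) i x]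
  simp only [Finset.mem_range]

lemma phi_head (k : ℕ) (x : ℕ → ℤ) :
    φ (head k x) = ∑ n ∈ Finset.range k, x n * φ (E n) := by
  rw [head_eq_sum, map_sum]
  exact Finset.sum_congr rfl fun n _ => by rw [map_zsmul, smul_eq_mul]

/-- if every tail of x from k is divisible by b^k, b ≥ 2, and φ kills basis vectors,
then φ x = 0 -/
lemma phi_eq_zero_of_pow_dvd (hE : ∀ n, φ (E n) = 0) {b : ℤ} (hb : 2 ≤ b)
    {x : ℕ → ℤ} (hx : ∀ k n, k ≤ n → b ^ k ∣ x n) : φ x = 0 := by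
  have key : ∀ k : ℕ, b ^ k ∣ φ x := by
    intro k
    rw [phi_eq φ k x, phi_head]
    simp only [hE, mul_zero, Finset.sum_const_zero, zero_add]
    exact dvd_phi_tail φ (hx k)
  by_contra hne
  set k := (φ x).natAbs + 1 with hk
  have hle : b ^ k ≤ |φ x| := Int.le_of_dvd (abs_pos.2 hne) ((dvd_abs _ _).2 (key k))
  have h2 : (2:ℤ) ^ k ≤ b ^ k := pow_le_pow_left₀ (by norm_num) hb k
  have h3 : |φ x| < 2 ^ k := by
    rw [Int.abs_eq_natAbs, hk]
    exact_mod_cast (Nat.lt_two_pow_self).trans_le (Nat.pow_le_pow_right (by norm_num) (Nat.le_succ _))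
  linarith


open Classical in
/-- recursion producing moduli `d k` and partial sums `s k` -/
def DS (r : ℕ → ℤ) : ℕ → ℤ × ℤ
  | 0 => (1, 0)
  | k+1 =>
    let p := DS r k
    let s' := p.2 + p.1 * |r k|
    (2 * p.1 * s', s')

variable {r : ℕ → ℤ} (hr : ∀ k, r k ≠ 0)

lemma DS_succ (k : ℕ) :
    DS r (k+1) = (2 * (DS r k).1 * ((DS r k).2 + (DS r k).1 * |r k|),
      (DS r k).2 + (DS r k).1 * |r k|) := rfl

include hr in
lemma DS_pos : ∀ k : ℕ, 1 ≤ (DS r k).1 ∧ (k : ℤ) ≤ (DS r k).2 := by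
  intro k
  induction k with
  | zero => exact ⟨le_refl _, by norm_num [DS]⟩
  | succ k ih =>
    obtain ⟨h1, h2⟩ := ih
    have hrk : 1 ≤ |r k| := Int.one_le_abs (hr k)
    have hk0 : (0:ℤ) ≤ (DS r k).2 := le_trans (Int.ofNat_nonneg k) h2
    have hs' : 1 ≤ (DS r k).2 + (DS r k).1 * |r k| := by nlinarith
    rw [DS_succ]; dsimp only
    constructor
    · nlinarith [mul_le_mul h1 hs' (by norm_num : (0:ℤ) ≤ 1) (by linarith : (0:ℤ) ≤ (DS r k).1)]
    · push_cast; nlinarith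

include hr in
lemma DS_two_s_le (k : ℕ) : 2 * (DS r (k+1)).2 ≤ (DS r (k+1)).1 := by
  obtain ⟨h1, h2⟩ := DS_pos hr k
  have hrk : 1 ≤ |r k| := Int.one_le_abs (hr k)
  have hk0 : (0:ℤ) ≤ (DS r k).2 := le_trans (Int.ofNat_nonneg k) h2
  have hs' : 1 ≤ (DS r k).2 + (DS r k).1 * |r k| := by nlinarith
  rw [DS_succ]; dsimp only
  nlinarith [mul_nonneg (by linarith : (0:ℤ) ≤ (DS r k).1 - 1) (by linarith : (0:ℤ) ≤ (DS r k).2 + (DS r k).1 * |r k|)]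

lemma DS_dvd_le {k m : ℕ} (h : k ≤ m) : (DS r k).1 ∣ (DS r m).1 := by
  induction m, h using Nat.le_induction with
  | base => exact dvd_refl _
  | succ m _ ih =>
    exact ih.trans ⟨2 * ((DS r m).2 + (DS r m).1 * |r m|), by rw [DS_succ]; ring⟩

/-- the coefficients -/
def A (r : ℕ → ℤ) (k : ℕ) : ℤ := if 0 < r k then (DS r k).1 else -(DS r k).1

lemma DS_dvd_A (k : ℕ) : (DS r k).1 ∣ A r k := by
  unfold A; split
  · exact dvd_refl _
  · exact dvd_neg.mpr (dvd_refl _)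

include hr in
lemma A_mul_r (k : ℕ) : A r k * r k = (DS r k).1 * |r k| := by
  unfold A; split
  · rw [abs_of_pos ‹_›]
  · rcases (hr k).lt_or_gt with h | h
    · rw [abs_of_neg h]; ring
    · exact absurd h ‹¬ 0 < r k›

end
end SpeckerAux

open SpeckerAux Classical in
lemma SpeckerAux.finite_support (φ : (ℕ → ℤ) →+ ℤ) : {n : ℕ | φ (E n) ≠ 0}.Finite := by
  by_contra hinf
  rw [← Set.not_infinite, not_not] at hinf
  set p : ℕ → Prop := fun n => φ (E n) ≠ 0 with hp
  have hν_mem : ∀ k, p (Nat.nth p k) := Nat.nth_mem_of_infinite hinf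
  have hν_mono : StrictMono (Nat.nth p) := Nat.nth_strictMono hinf
  set ν : ℕ → ℕ := Nat.nth p with hν
  set r : ℕ → ℤ := fun k => φ (E (ν k)) with hrdef
  have hr : ∀ k, r k ≠ 0 := hν_mem
  set x : ℕ → ℤ := fun n => if h : p n then A r (Nat.count p n) else 0 with hx
  -- the head of x below ν k is the sum of the first k basis contributions
  have hcount_nu : ∀ k, Nat.count p (ν k) = k := Nat.count_nth_of_infinite hinf
  have hhead : ∀ k, head (ν k) x = ∑ j ∈ Finset.range k, A r j • E (ν j) := by
    intro k
    funext n
    have hRHS : (∑ j ∈ Finset.range k, A r j • E (ν j)) n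
        = ∑ j ∈ Finset.range k, if n = ν j then A r j else 0 := by
      rw [Finset.sum_apply]
      exact Finset.sum_congr rfl fun j _ => by
        simp [E, Pi.single_apply, mul_ite]
    rw [hRHS]
    by_cases hn : n < ν k
    · by_cases hpn : p n
      · have hcn : Nat.count p n < k := by
          have h := Nat.nth_count hpn
          rw [← hν_mono.lt_iff_lt]
          show Nat.nth p (Nat.count p n) < Nat.nth p k
          rw [h]; exact hn
        have hmem : Nat.count p n ∈ Finset.range k := Finset.mem_range.mpr hcn
        rw [Finset.sum_eq_single_of_mem _ hmem ?other]
        · rw [if_pos (Nat.nth_count hpn).symm]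
          simp only [head, if_pos hn, hx]
          rw [dif_pos hpn]
        case other =>
          intro j _ hj
          rw [if_neg]
          intro hne
          apply hj
          have : Nat.count p n = j := by rw [hne, hcount_nu]
          exact this.symm
      · have : x n = 0 := by rw [hx]; exact dif_neg hpn
        simp only [head, if_pos hn, this]
        refine (Finset.sum_eq_zero fun j _ => ?_).symm
        rw [if_neg]
        intro hne
        exact hpn (hne ▸ hν_mem j)
    · simp only [head, if_neg hn]
      refine (Finset.sum_eq_zero fun j hj => ?_).symm
      rw [if_neg]
      intro hne
      have h2 := hν_mono (Finset.mem_range.mp hj)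
      omega
  -- φ of the head equals the partial sum s k
  have hphihead : ∀ k, φ (head (ν k) x) = (DS r k).2 := by
    intro k
    rw [hhead k, map_sum]
    have : ∀ j, φ (A r j • E (ν j)) = A r j * r j := fun j => by
      rw [map_zsmul, smul_eq_mul]
    simp only [this]
    induction k with
    | zero => simp [DS]
    | succ k ih =>
      rw [Finset.sum_range_succ, ih, A_mul_r hr, DS_succ]
  -- divisibility of φ x - s k
  have hdvd : ∀ k, (DS r k).1 ∣ φ x - (DS r k).2 := by
    intro k
    have := phi_eq φ (ν k) x
    rw [hphihead k] at this
    rw [this, add_sub_cancel_left]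
    apply dvd_phi_tail
    intro n hn
    by_cases hpn : p n
    · have h1 : k ≤ Nat.count p n := by
        rw [← hcount_nu k]
        exact Nat.count_monotone p hn
      have h2 : (DS r k).1 ∣ (DS r (Nat.count p n)).1 := DS_dvd_le h1
      have h3 : (DS r (Nat.count p n)).1 ∣ x n := by
        show (DS r (Nat.count p n)).1 ∣ x n
        simp only [hx]; rw [dif_pos hpn]; exact DS_dvd_A _
      exact h2.trans h3
    · show (DS r k).1 ∣ x n
      simp only [hx]; rw [dif_neg hpn]; exact dvd_zero _
  -- contradiction
  set N : ℤ := φ x with hN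
  set k : ℕ := N.natAbs + 1 with hk
  obtain ⟨hd1, hsk⟩ := DS_pos hr k
  have h2s : 2 * (DS r k).2 ≤ (DS r k).1 := DS_two_s_le hr N.natAbs
  have hNlt : N < (DS r k).2 := by
    have : N ≤ |N| := le_abs_self N
    rw [Int.abs_eq_natAbs] at this
    have : N < (k:ℤ) := by omega
    omega
  have habs : -N ≤ |N| := neg_le_abs N
  have hub : (DS r k).2 - N < (DS r k).1 := by
    rw [Int.abs_eq_natAbs] at habs
    omega
  have hdN := hdvd k
  have : (DS r k).1 ∣ (DS r k).2 - N := by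
    have := hdN.neg_right
    rwa [neg_sub] at this
  have := Int.le_of_dvd (by omega) this
  omega

namespace SpeckerAux

lemma phi_eq_zero_of_basis (φ : (ℕ → ℤ) →+ ℤ) (hE : ∀ n, φ (E n) = 0) (x : ℕ → ℤ) :
    φ x = 0 := by
  have hcop : ∀ n : ℕ, ∃ u v : ℤ, u * 2 ^ n + v * 3 ^ n = 1 := by
    intro n
    have h : IsCoprime (2:ℤ) 3 := by
      rw [Int.isCoprime_iff_gcd_eq_one]; decide
    exact (h.pow : IsCoprime ((2:ℤ) ^ n) ((3:ℤ) ^ n))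
  choose u v huv using hcop
  have hx : x = (fun n => u n * 2 ^ n * x n) + fun n => v n * 3 ^ n * x n := by
    funext n
    simp only [Pi.add_apply]
    linear_combination x n * (huv n).symm
  have h2 : φ (fun n => u n * 2 ^ n * x n) = 0 := by
    refine phi_eq_zero_of_pow_dvd φ hE (le_refl (2:ℤ)) fun k n hkn => ?_
    exact ((pow_dvd_pow 2 hkn).mul_left (u n)).mul_right (x n)
  have h3 : φ (fun n => v n * 3 ^ n * x n) = 0 := by
    refine phi_eq_zero_of_pow_dvd φ hE (by norm_num : (2:ℤ) ≤ 3) fun k n hkn => ?_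
    exact ((pow_dvd_pow 3 hkn).mul_left (v n)).mul_right (x n)
  rw [hx, map_add, h2, h3, add_zero]

/-- the dot-product homomorphism -/
noncomputable def F : (ℕ →₀ ℤ) →+ ((ℕ → ℤ) →+ ℤ) :=
  AddMonoidHom.mk'
    (fun p => AddMonoidHom.mk' (fun m => p.sum fun i pi => pi * m i)
      (fun m m' => by
        simp only [Finsupp.sum, Pi.add_apply, mul_add]
        rw [Finset.sum_add_distrib]))
    (fun p q => by
      ext m
      simp only [AddMonoidHom.mk'_apply, AddMonoidHom.add_apply]
      rw [Finsupp.sum_add_index' (by simp) (by intros; rw [add_mul])])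

lemma F_apply (p : ℕ →₀ ℤ) (m : ℕ → ℤ) : F p m = p.sum fun i pi => pi * m i := rfl

lemma F_single (p : ℕ →₀ ℤ) (n : ℕ) : F p (E n) = p n := by
  rw [F_apply]
  rw [Finsupp.sum_eq_single n]
  · simp [E, Pi.single_apply]
  · intro b _ hb
    simp [E, Pi.single_apply, hb]
  · simp

lemma F_injective : Function.Injective F := by
  intro p q h
  ext n
  have := congrArg (fun ψ => ψ (E n)) h
  simpa [F_single] using this

lemma F_surjective : Function.Surjective F := by
  intro φ
  have hfin := finite_support φ
  classical
  refine ⟨⟨hfin.toFinset, fun n => φ (E n), fun n => by simp⟩, ?_⟩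
  set p : ℕ →₀ ℤ := ⟨hfin.toFinset, fun n => φ (E n), fun n => by simp⟩ with hp
  have hE : ∀ n, (φ - F p) (E n) = 0 := by
    intro n
    simp only [AddMonoidHom.sub_apply, F_single]
    show φ (E n) - p n = 0
    simp [hp]
  have : ∀ x, (φ - F p) x = 0 := phi_eq_zero_of_basis _ hE
  ext x
  have := this x
  simp only [AddMonoidHom.sub_apply] at this
  omega

end SpeckerAux


/-- Specker's theorem: every additive group homomorphism `(ℕ → ℤ) → ℤ` is given by
dot product with a finitely supported sequence; i.e. the map sending
`p : ℕ →₀ ℤ` to the homomorphism `m ↦ ∑ i, p i * m i` is an isomorphism of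
additive groups from `ℤ^∞` to the dual of `ℤ^ω`. -/
theorem specker_zinfty_dual_of_zomega :
    ∃ e : (ℕ →₀ ℤ) ≃+ ((ℕ → ℤ) →+ ℤ),
      ∀ (p : ℕ →₀ ℤ) (m : ℕ → ℤ), e p m = p.sum fun i pi => pi * m i := by
  refine ⟨AddEquiv.ofBijective SpeckerAux.F ⟨SpeckerAux.F_injective, SpeckerAux.F_surjective⟩,
    fun p m => ?_⟩
  rfl
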